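/- Let n, q ∈ ℕ, let f : ℝⁿ × ℝ^q → ℝⁿ, let U ⊆ ℝ^q be a nonempty input-constraint set, and write f̄(x) := f(x,0). Let h : ℝⁿ → ℝ, m ≥ 1, and φ_1,…,φ_m ∈ (0,1]. Define ψ_0 := h; for l = 1,…,m−1, ψ_l(x) := ψ_{l−1}(f̄(x)) − ψ_{l−1}(x) + φ_l ψ_{l−1}(x); and ψ_m(x,u) := ψ_{m−1}(f(x,u)) − ψ_{m−1}(x) + φ_m ψ_{m−1}(x). Define C^l := {x ∈ ℝⁿ : ψ_l(x) ≥ 0} for l = 0,…,m−1. Assume (RD): for all x ∈ ℝⁿ, all u ∈ U and all 0 ≤ l ≤ m−2, h(f̄^l(f(x,u))) = h(f̄^{l+1}(x)), where f̄^l is the l-fold composition of f̄. Assume (A1): for every x ∈ ℝⁿ there exists u^M ∈ U with ψ_m(x, u^M) ≥ 0. Then for every x ∈ ⋂_{l=0}^{m−1} C^l there exists u ∈ U such that ψ_m(x,u) ≥ 0 and f(x,u) ∈ ⋂_{l=0}^{m−1} C^l. -/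
import Mathlib


/-- One-step viability of the DHCBF safe set: under the relative-degree
condition (RD) and Assumption 1 (A1), from every state in the intersection
of the safe sets `C^l = {ψ_l ≥ 0}`, `l = 0,…,m-1`, there is an admissible
input `u ∈ U` satisfying the DHCBF constraint `ψ_m(x,u) ≥ 0` and keeping the
next state `f(x,u)` in all safe sets. -/
theorem dhcbf_one_step_viability
    (n q : ℕ) (f : (Fin n → ℝ) → (Fin q → ℝ) → (Fin n → ℝ))
    (U : Set (Fin q → ℝ)) (hU : U.Nonempty)
    (h : (Fin n → ℝ) → ℝ) (m : ℕ) (hm : 1 ≤ m) (φ : ℕ → ℝ)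
    (hφ : ∀ l : ℕ, 1 ≤ l → l ≤ m → 0 < φ l ∧ φ l ≤ 1)
    (ψ : ℕ → (Fin n → ℝ) → ℝ)
    (hψ0 : ψ 0 = h)
    (hψ : ∀ l : ℕ, l < m - 1 → ∀ x,
      ψ (l + 1) x = ψ l (f x 0) - ψ l x + φ (l + 1) * ψ l x)
    (hRD : ∀ x : Fin n → ℝ, ∀ u ∈ U, ∀ l : ℕ, l + 2 ≤ m →
      h ((fun y => f y 0)^[l] (f x u)) = h ((fun y => f y 0)^[l + 1] x))
    (hA1 : ∀ x : Fin n → ℝ, ∃ uM ∈ U,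
      ψ (m - 1) (f x uM) - ψ (m - 1) x + φ m * ψ (m - 1) x ≥ 0) :
    ∀ x : Fin n → ℝ, (∀ l < m, ψ l x ≥ 0) →
      ∃ u ∈ U, (ψ (m - 1) (f x u) - ψ (m - 1) x + φ m * ψ (m - 1) x ≥ 0) ∧
        ∀ l < m, ψ l (f x u) ≥ 0 := by
  intro x hx
  obtain ⟨uM, huM, hineq⟩ := hA1 x
  refine ⟨uM, huM, hineq, ?_⟩
  -- key: ψ_l(f̄^[j](f y u)) = ψ_l(f̄^[j+1] y) whenever l + j + 2 ≤ m
  have key : ∀ l j : ℕ, l + j + 2 ≤ m → ∀ y : Fin n → ℝ, ∀ u ∈ U,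
      ψ l ((fun y => f y 0)^[j] (f y u)) = ψ l ((fun y => f y 0)^[j + 1] y) := by
    intro l
    induction l with
    | zero =>
      intro j hj y u hu
      simpa [hψ0] using hRD y u hu j (by omega)
    | succ l ih =>
      intro j hj y u hu
      have hlm : l < m - 1 := by omega
      have e1 := hψ l hlm ((fun y => f y 0)^[j] (f y u))
      have e2 := hψ l hlm ((fun y => f y 0)^[j + 1] y)
      have r1 : f ((fun y => f y 0)^[j] (f y u)) 0
          = (fun y => f y 0)^[j + 1] (f y u) :=
        (Function.iterate_succ_apply' (fun y => f y 0) j (f y u)).symm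
      have r2 : f ((fun y => f y 0)^[j + 1] y) 0
          = (fun y => f y 0)^[j + 2] y :=
        (Function.iterate_succ_apply' (fun y => f y 0) (j + 1) y).symm
      rw [r1] at e1
      rw [r2] at e2
      rw [e1, e2, ih (j + 1) (by omega) y u hu, ih j (by omega) y u hu]
  intro l hl
  rcases Nat.lt_or_ge (l + 1) m with hlt | hge
  · -- l + 2 ≤ m : input-independent levels
    have hk := key l 0 (by omega) x uM huM
    simp only [zero_add, Function.iterate_zero_apply, Function.iterate_one] at hk
    have e := hψ l (by omega) x
    have hψl : ψ l x ≥ 0 := hx l hl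
    have hψl1 : ψ (l + 1) x ≥ 0 := hx (l + 1) hlt
    have hφl := hφ (l + 1) (by omega) (by omega)
    have hmul : (1 - φ (l + 1)) * ψ l x ≥ 0 :=
      mul_nonneg (by linarith [hφl.2]) hψl
    rw [hk]
    nlinarith [e]
  · -- l = m - 1 : use A1
    have hlm : l = m - 1 := by omega
    subst hlm
    have hψl : ψ (m - 1) x ≥ 0 := hx (m - 1) (by omega)
    have hφm := hφ m hm le_rfl
    have hmul : (1 - φ m) * ψ (m - 1) x ≥ 0 :=
      mul_nonneg (by linarith [hφm.2]) hψl
    nlinarith [hineq]
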